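/- Let d ≥ 2, n ≥ 1, and let H be a subgroup of U(d). Every element of the subgroup of invertible matrices on (ℂ^d)^{⊗n} generated by H^{×n} ∪ {P(σ) : σ a permutation of Fin n} can be written in the form W · P(σ) with W ∈ H^{×n} and σ a permutation of Fin n, and this representation is unique: if W₁ · P(σ₁) = W₂ · P(σ₂) with W₁, W₂ ∈ H^{×n}, then W₁ = W₂ and σ₁ = σ₂. -/

import Mathlib

/- Every element of the subgroup of invertible matrices on (ℂ^d)^{⊗n} generated by
H^{×n} ∪ {P(σ)} can be written uniquely in the canonical form W · P(σ) with
W ∈ H^{×n} and σ a permutation of Fin n. -/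

open Matrix

noncomputable section

/-- Matrices on the n-fold tensor power (ℂ^d)^{⊗n}. -/
abbrev MatN (d n : ℕ) := Matrix (Fin n → Fin d) (Fin n → Fin d) ℂ

/-- The tensor product V₁ ⊗ ⋯ ⊗ Vₙ of n matrices on ℂ^d. -/
def tensProd (d n : ℕ) (V : Fin n → Matrix (Fin d) (Fin d) ℂ) : MatN d n :=
  Matrix.of fun x y => ∏ i, V i (x i) (y i)

/-- The permutation operator P(σ) on (ℂ^d)^{⊗n}. -/
def permMat (d n : ℕ) (σ : Equiv.Perm (Fin n)) : MatN d n :=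
  Matrix.of fun x y => if x = y ∘ ⇑σ⁻¹ then 1 else 0

/-- H^{×n} : the set of tensor products V₁ ⊗ ⋯ ⊗ Vₙ with each Vᵢ ∈ H. -/
def groupTensorSet (d n : ℕ) (H : Subgroup (Matrix.unitaryGroup (Fin d) ℂ)) :
    Set (MatN d n) :=
  {W | ∃ V : Fin n → H,
    W = tensProd d n fun i => ((V i : Matrix.unitaryGroup (Fin d) ℂ) : Matrix (Fin d) (Fin d) ℂ)}

namespace CanonAux

variable {d n : ℕ}

lemma tensProd_mul (V W : Fin n → Matrix (Fin d) (Fin d) ℂ) :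
    tensProd d n V * tensProd d n W = tensProd d n fun i => V i * W i := by
  ext x y
  simp only [tensProd, Matrix.mul_apply, Matrix.of_apply]
  rw [Finset.prod_univ_sum (fun _ : Fin n => (Finset.univ : Finset (Fin d)))
      (fun i j => V i (x i) j * W i j (y i)), Fintype.piFinset_univ]
  exact Finset.sum_congr rfl fun z _ => (Finset.prod_mul_distrib).symm

lemma tensProd_one : tensProd d n (fun _ => (1 : Matrix (Fin d) (Fin d) ℂ)) = 1 := by
  ext x y
  simp only [tensProd, Matrix.of_apply, Matrix.one_apply]
  by_cases h : x = y
  · subst h; simp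
  · rw [if_neg h]
    obtain ⟨i, hi⟩ := Function.ne_iff.mp h
    exact Finset.prod_eq_zero (Finset.mem_univ i) (by simp [hi])

lemma mul_permMat_apply (M : MatN d n) (σ : Equiv.Perm (Fin n)) (x y : Fin n → Fin d) :
    (M * permMat d n σ) x y = M x (y ∘ ⇑σ⁻¹) := by
  simp only [permMat, Matrix.mul_apply, Matrix.of_apply, mul_ite, mul_one, mul_zero]
  exact Fintype.sum_ite_eq' (y ∘ ⇑σ⁻¹) (M x)

lemma permMat_mul_apply (M : MatN d n) (σ : Equiv.Perm (Fin n)) (x y : Fin n → Fin d) :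
    (permMat d n σ * M) x y = M (x ∘ ⇑σ) y := by
  simp only [permMat, Matrix.mul_apply, Matrix.of_apply, ite_mul, one_mul, zero_mul]
  have hcond : ∀ z : Fin n → Fin d, (x = z ∘ ⇑σ⁻¹) = (z = x ∘ ⇑σ) := by
    intro z
    simp only [eq_iff_iff]
    constructor
    · rintro rfl; funext i; simp
    · rintro rfl; funext i; simp
  simp_rw [hcond]
  exact Fintype.sum_ite_eq' (x ∘ ⇑σ) (fun z => M z y)

lemma permMat_mul (σ τ : Equiv.Perm (Fin n)) :
    permMat d n σ * permMat d n τ = permMat d n (σ * τ) := by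
  ext x y
  rw [permMat_mul_apply]
  simp only [permMat, Matrix.of_apply]
  have hcond : (x ∘ ⇑σ = y ∘ ⇑τ⁻¹) = (x = y ∘ ⇑(σ * τ)⁻¹) := by
    simp only [eq_iff_iff]
    constructor
    · intro h; funext i
      have := congrFun h (σ⁻¹ i)
      simpa [_root_.mul_inv_rev] using this
    · intro h; subst h; funext i
      simp [_root_.mul_inv_rev]
  simp only [hcond]

lemma permMat_one : permMat d n 1 = 1 := by
  ext x y
  simp only [permMat, Matrix.of_apply, Matrix.one_apply, inv_one]
  have : (x = y ∘ ⇑(1 : Equiv.Perm (Fin n))) = (x = y) := by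
    simp only [eq_iff_iff]
    constructor
    · intro h; funext i; exact congrFun h i
    · rintro rfl; rfl
  simp only [this]

lemma permMat_mul_tensProd (σ : Equiv.Perm (Fin n)) (V : Fin n → Matrix (Fin d) (Fin d) ℂ) :
    permMat d n σ * tensProd d n V = tensProd d n (fun i => V (σ⁻¹ i)) * permMat d n σ := by
  ext x y
  rw [permMat_mul_apply, mul_permMat_apply]
  simp only [tensProd, Matrix.of_apply, Function.comp_apply]
  rw [← Equiv.prod_comp σ⁻¹ (fun i => V i (x (σ i)) (y i))]
  exact Finset.prod_congr rfl fun i _ => by simp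

lemma perm_apply_inv_self (σ : Equiv.Perm (Fin n)) (x : Fin n) : σ (σ⁻¹ x) = x :=
  Equiv.Perm.eq_inv_iff_eq.mp rfl

/-- Key rigidity lemma: a tensor-product matrix can only equal a permutation
matrix for the trivial permutation (when `d ≥ 2`). -/
lemma perm_eq_one_of_tensProd_eq (hd : 2 ≤ d) (V : Fin n → Matrix (Fin d) (Fin d) ℂ)
    (σ : Equiv.Perm (Fin n)) (h : tensProd d n V = permMat d n σ) : σ = 1 := by
  by_contra hσ
  obtain ⟨j, hj⟩ : ∃ j, σ⁻¹ j ≠ j := by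
    by_contra hall
    push_neg at hall
    exact hσ (Equiv.ext fun i => by simpa using (hall (σ i)).symm)
  set k := σ⁻¹ j with hk
  have hkj : k ≠ j := hj
  have hσk : σ⁻¹ k ≠ k := by
    intro hc
    apply hkj
    have h1 : k = σ k := by conv_lhs => rw [← perm_apply_inv_self σ k, hc]
    have h2 : σ k = j := by rw [hk, perm_apply_inv_self]
    exact h1.trans h2
  have h2 : (1 : ℕ) < d := lt_of_lt_of_le one_lt_two hd
  set a : Fin d := ⟨0, by omega⟩ with ha
  set b : Fin d := ⟨1, h2⟩ with hb
  have hab : a ≠ b := by simp [ha, hb, Fin.ext_iff]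
  set y₁ : Fin n → Fin d := fun _ => a with hy₁
  set y₂ : Fin n → Fin d := Function.update y₁ k b with hy₂
  have hy₂k : y₂ k = b := by simp [hy₂]
  have hy₂ne : ∀ i, i ≠ k → y₂ i = a := fun i hi => by simp [hy₂, Function.update_of_ne hi, hy₁]
  have hE : ∀ x y : Fin n → Fin d,
      (∏ i, V i (x i) (y i)) = if x = y ∘ ⇑σ⁻¹ then 1 else 0 := by
    intro x y
    have := congrFun (congrFun h x) y
    simpa [tensProd, permMat] using this
  have hA : (∏ i, V i ((y₁ ∘ ⇑σ⁻¹) i) (y₁ i)) = 1 := by rw [hE]; simp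
  have hB : (∏ i, V i ((y₂ ∘ ⇑σ⁻¹) i) (y₂ i)) = 1 := by rw [hE]; simp
  have hne : y₂ ∘ ⇑σ⁻¹ ≠ y₁ ∘ ⇑σ⁻¹ := by
    intro hc
    have h1 := congrFun hc j
    simp only [Function.comp_apply, ← hk] at h1
    rw [hy₂k] at h1
    exact hab (by simpa [hy₁] using h1.symm)
  have hC : (∏ i, V i ((y₂ ∘ ⇑σ⁻¹) i) (y₁ i)) = 0 := by rw [hE]; rw [if_neg hne]
  have hD : (∏ i, V i ((y₁ ∘ ⇑σ⁻¹) i) (y₂ i)) = 0 := by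
    rw [hE]; rw [if_neg (fun hc => hne hc.symm)]
  have key : ∀ i, V i ((y₁ ∘ ⇑σ⁻¹) i) (y₁ i) * V i ((y₂ ∘ ⇑σ⁻¹) i) (y₂ i)
      = V i ((y₂ ∘ ⇑σ⁻¹) i) (y₁ i) * V i ((y₁ ∘ ⇑σ⁻¹) i) (y₂ i) := by
    intro i
    by_cases hik : σ⁻¹ i = k
    · have hij : i = j := by
        have := congrArg σ hik
        simp only [perm_apply_inv_self] at this
        rw [this, hk, perm_apply_inv_self]
      have heq : y₂ i = y₁ i := by
        rw [hij, hy₂ne j (fun hc => hkj hc.symm)]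
      simp only [Function.comp_apply, heq]
      all_goals exact mul_comm _ _
    · have heq : y₂ (σ⁻¹ i) = y₁ (σ⁻¹ i) := by rw [hy₂ne _ hik]
      simp only [Function.comp_apply, heq]
      all_goals exact mul_comm _ _
  have hcontra : (1 : ℂ) = 0 := by
    calc (1 : ℂ) = (∏ i, V i ((y₁ ∘ ⇑σ⁻¹) i) (y₁ i)) * ∏ i, V i ((y₂ ∘ ⇑σ⁻¹) i) (y₂ i) := by
          rw [hA, hB, one_mul]
      _ = ∏ i, (V i ((y₁ ∘ ⇑σ⁻¹) i) (y₁ i) * V i ((y₂ ∘ ⇑σ⁻¹) i) (y₂ i)) :=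
          (Finset.prod_mul_distrib).symm
      _ = ∏ i, (V i ((y₂ ∘ ⇑σ⁻¹) i) (y₁ i) * V i ((y₁ ∘ ⇑σ⁻¹) i) (y₂ i)) :=
          Finset.prod_congr rfl fun i _ => key i
      _ = (∏ i, V i ((y₂ ∘ ⇑σ⁻¹) i) (y₁ i)) * ∏ i, V i ((y₁ ∘ ⇑σ⁻¹) i) (y₂ i) :=
          Finset.prod_mul_distrib
      _ = 0 := by rw [hC, zero_mul]
  exact one_ne_zero hcontra

end CanonAux

open CanonAux in
theorem canonical_form_semidirect (d n : ℕ) (hd : 2 ≤ d) (hn : 1 ≤ n)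
    (H : Subgroup (Matrix.unitaryGroup (Fin d) ℂ)) :
    (∀ g ∈ Subgroup.closure
        {g : (MatN d n)ˣ | (g : MatN d n) ∈
          groupTensorSet d n H ∪ {P | ∃ σ : Equiv.Perm (Fin n), P = permMat d n σ}},
      ∃ W ∈ groupTensorSet d n H, ∃ σ : Equiv.Perm (Fin n),
        (g : MatN d n) = W * permMat d n σ) ∧
    (∀ W₁ ∈ groupTensorSet d n H, ∀ W₂ ∈ groupTensorSet d n H,
      ∀ σ₁ σ₂ : Equiv.Perm (Fin n),
        W₁ * permMat d n σ₁ = W₂ * permMat d n σ₂ → W₁ = W₂ ∧ σ₁ = σ₂) := by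
  let T : (Fin n → H) → MatN d n := fun V =>
    tensProd d n fun i => ((V i : Matrix.unitaryGroup (Fin d) ℂ) : Matrix (Fin d) (Fin d) ℂ)
  have hT_mul : ∀ V W : Fin n → H, T V * T W = T (fun i => V i * W i) := by
    intro V W
    rw [tensProd_mul]
    rfl
  have hT_one : T (fun _ => 1) = 1 := by
    have h1 : T (fun _ => 1) = tensProd d n (fun _ => (1 : Matrix (Fin d) (Fin d) ℂ)) := by
      simp [T]
    rw [h1, tensProd_one]
  have hT_inv : ∀ V : Fin n → H,
      T (fun i => (V i)⁻¹) * T V = 1 ∧ T V * T (fun i => (V i)⁻¹) = 1 := by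
    intro V
    have e1 : (fun i => (V i)⁻¹ * V i) = fun _ => (1 : H) := by
      funext i; exact inv_mul_cancel (V i)
    have e2 : (fun i => V i * (V i)⁻¹) = fun _ => (1 : H) := by
      funext i; exact mul_inv_cancel (V i)
    constructor
    · rw [hT_mul, e1, hT_one]
    · rw [hT_mul, e2, hT_one]
  have hTmem : ∀ V : Fin n → H, T V ∈ groupTensorSet d n H := fun V => ⟨V, rfl⟩
  constructor
  · intro g hg
    induction hg using Subgroup.closure_induction with
    | mem x hx =>
      rcases hx with hx | ⟨σ, hσ⟩
      · exact ⟨(x : MatN d n), hx, 1, by rw [permMat_one, mul_one]⟩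
      · exact ⟨1, ⟨fun _ => 1, hT_one.symm⟩, σ, by rw [hσ, one_mul]⟩
    | one =>
      exact ⟨1, ⟨fun _ => 1, hT_one.symm⟩, 1, by rw [permMat_one, mul_one, Units.val_one]⟩
    | mul x y hx hy ihx ihy =>
      obtain ⟨W₁, ⟨V₁, rfl⟩, σ₁, h₁⟩ := ihx
      obtain ⟨W₂, ⟨V₂, rfl⟩, σ₂, h₂⟩ := ihy
      refine ⟨T (fun i => V₁ i * V₂ (σ₁⁻¹ i)), hTmem _, σ₁ * σ₂, ?_⟩
      have hxy : (↑(x * y) : MatN d n) = T V₁ * permMat d n σ₁ * (T V₂ * permMat d n σ₂) := by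
        rw [Units.val_mul, h₁, h₂]
      rw [hxy, ← hT_mul]
      have hswap : permMat d n σ₁ * T V₂ = T (fun i => V₂ (σ₁⁻¹ i)) * permMat d n σ₁ :=
        permMat_mul_tensProd σ₁ _
      calc T V₁ * permMat d n σ₁ * (T V₂ * permMat d n σ₂)
          = T V₁ * (permMat d n σ₁ * T V₂) * permMat d n σ₂ := by
            simp only [mul_assoc]
        _ = T V₁ * (T (fun i => V₂ (σ₁⁻¹ i)) * permMat d n σ₁) * permMat d n σ₂ := by rw [hswap]
        _ = T V₁ * T (fun i => V₂ (σ₁⁻¹ i)) * (permMat d n σ₁ * permMat d n σ₂) := by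
            simp only [mul_assoc]
        _ = T V₁ * T (fun i => V₂ (σ₁⁻¹ i)) * permMat d n (σ₁ * σ₂) := by rw [permMat_mul]
    | inv x hx ihx =>
      obtain ⟨W, ⟨V, rfl⟩, σ, hW⟩ := ihx
      refine ⟨T (fun i => (V (σ i))⁻¹), hTmem _, σ⁻¹, ?_⟩
      have hinv : (T (fun i => (V (σ i))⁻¹) * permMat d n σ⁻¹) * (x : MatN d n) = 1 := by
        rw [hW]
        have hswap : permMat d n σ⁻¹ * T V = T (fun i => V (σ i)) * permMat d n σ⁻¹ := by
          have h3 := permMat_mul_tensProd σ⁻¹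
            (fun i => ((V i : Matrix.unitaryGroup (Fin d) ℂ) : Matrix (Fin d) (Fin d) ℂ))
          simpa using h3
        calc T (fun i => (V (σ i))⁻¹) * permMat d n σ⁻¹ * (T V * permMat d n σ)
            = T (fun i => (V (σ i))⁻¹) * (permMat d n σ⁻¹ * T V) * permMat d n σ := by
              simp only [mul_assoc]
          _ = T (fun i => (V (σ i))⁻¹) * (T (fun i => V (σ i)) * permMat d n σ⁻¹) *
                permMat d n σ := by rw [hswap]
          _ = (T (fun i => (V (σ i))⁻¹) * T (fun i => V (σ i))) *
                (permMat d n σ⁻¹ * permMat d n σ) := by simp only [mul_assoc]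
          _ = 1 := by
              rw [(hT_inv (fun i => V (σ i))).1, permMat_mul, inv_mul_cancel, permMat_one,
                one_mul]
      have h4 := congrArg (fun M : MatN d n => M * ((x⁻¹ : (MatN d n)ˣ) : MatN d n)) hinv
      simp only [one_mul] at h4
      rw [mul_assoc] at h4
      have h5 : (x : MatN d n) * ((x⁻¹ : (MatN d n)ˣ) : MatN d n) = 1 := by
        rw [← Units.val_mul, mul_inv_cancel, Units.val_one]
      rw [h5, mul_one] at h4
      exact h4.symm
  · intro W₁ hW₁ W₂ hW₂ σ₁ σ₂ heq
    obtain ⟨V₁, rfl⟩ := hW₁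
    obtain ⟨V₂, rfl⟩ := hW₂
    have heq' : T V₁ * permMat d n σ₁ = T V₂ * permMat d n σ₂ := heq
    have key : T (fun i => (V₂ i)⁻¹ * V₁ i) = permMat d n (σ₂ * σ₁⁻¹) := by
      calc T (fun i => (V₂ i)⁻¹ * V₁ i)
          = T (fun i => (V₂ i)⁻¹) * T V₁ := (hT_mul _ _).symm
        _ = T (fun i => (V₂ i)⁻¹) * T V₁ * (permMat d n σ₁ * permMat d n σ₁⁻¹) := by
            rw [permMat_mul, mul_inv_cancel, permMat_one, mul_one]
        _ = T (fun i => (V₂ i)⁻¹) * (T V₁ * permMat d n σ₁) * permMat d n σ₁⁻¹ := by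
            simp only [mul_assoc]
        _ = T (fun i => (V₂ i)⁻¹) * (T V₂ * permMat d n σ₂) * permMat d n σ₁⁻¹ := by rw [heq']
        _ = (T (fun i => (V₂ i)⁻¹) * T V₂) * (permMat d n σ₂ * permMat d n σ₁⁻¹) := by
            simp only [mul_assoc]
        _ = permMat d n (σ₂ * σ₁⁻¹) := by rw [(hT_inv V₂).1, permMat_mul, one_mul]
    have hσ : σ₂ * σ₁⁻¹ = 1 := perm_eq_one_of_tensProd_eq hd _ _ key
    have hσeq : σ₁ = σ₂ := (mul_inv_eq_one.mp hσ).symm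
    refine ⟨?_, hσeq⟩
    calc T V₁ = T V₁ * (permMat d n σ₁ * permMat d n σ₁⁻¹) := by
          rw [permMat_mul, mul_inv_cancel, permMat_one, mul_one]
      _ = (T V₁ * permMat d n σ₁) * permMat d n σ₁⁻¹ := by simp only [mul_assoc]
      _ = (T V₂ * permMat d n σ₂) * permMat d n σ₁⁻¹ := by rw [heq']
      _ = T V₂ * (permMat d n σ₂ * permMat d n σ₁⁻¹) := by simp only [mul_assoc]
      _ = T V₂ := by rw [permMat_mul, hσeq, mul_inv_cancel, permMat_one, mul_one]
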